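/- Let (Ω, P) be a probability space, U a finite type, V a linear order, and h : Ω → (U → V) a random hash function. Fix a finite set A ⊆ U, a natural number ℓ with ℓ ≤ |A|, a real ε ≥ 0, and a subset C ⊆ A with |C| ≥ ℓ. For ω ∈ Ω let f_ω : U → V × U be the injective map x ↦ (h(ω)(x), x), where V × U carries the lexicographic order. Assume that for every X ⊆ A with |X| = ℓ, P{ω : ∀ x ∈ X, ∀ y ∈ A \ X, f_ω(x) < f_ω(y)} ≤ (1+ε) / C(|A|, ℓ). Then P{ω : ∃ C' ⊆ C with |C'| = ℓ and f_ω(C') = Smallest(f_ω(A), ℓ)} ≤ (1+ε) · C(|C|, ℓ) / C(|A|, ℓ). -/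

import Mathlib

open MeasureTheory

/-- `Smallest S r` is the set of the `r` smallest elements of the finite set `S`
(in a linear order); if `|S| ≤ r` it is `S` itself. -/
def Smallest {L : Type*} [LinearOrder L] (S : Finset L) (r : ℕ) : Finset L :=
  ((S.sort (· ≤ ·)).take r).toFinset

lemma smallest_lt {L : Type*} [LinearOrder L] (S : Finset L) (r : ℕ)
    {a b : L} (ha : a ∈ Smallest S r) (hb : b ∈ S) (hb' : b ∉ Smallest S r) : a < b := by
  classical
  set l := S.sort (· ≤ ·) with hl
  have hpw : (l.take r ++ l.drop r).Pairwise (· < ·) := by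
    rw [List.take_append_drop]; exact S.sortedLT_sort.pairwise
  have ha' : a ∈ l.take r := by simpa [Smallest, hl] using ha
  have hb2 : b ∈ l := by simpa [hl] using hb
  have hb3 : b ∈ l.drop r := by
    have : b ∉ l.take r := by simpa [Smallest, hl] using hb'
    have hb4 : b ∈ l.take r ++ l.drop r := by rw [List.take_append_drop]; exact hb2
    rcases List.mem_append.mp hb4 with h | h
    · exact absurd h this
    · exact h
  exact (List.pairwise_append.mp hpw).2.2 a ha' b hb3

/-- **Union bound over the `ℓ`-subsets of `C`.**  Let `h : Ω → (U → V)` be a random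
hash function, `A ⊆ U` finite, `ℓ ≤ |A|`, `ε ≥ 0`, and `C ⊆ A` with `|C| ≥ ℓ`.
Write `f_ω x = (h ω x, x) ∈ V ×ₗ U` (lexicographic order).  If for every `X ⊆ A`
with `|X| = ℓ` the probability that all of `f_ω(X)` lies strictly below all of
`f_ω(A \ X)` is at most `(1+ε)/C(|A|,ℓ)`, then the probability that some
`ℓ`-subset `C' ⊆ C` has `f_ω(C') = Smallest(f_ω(A), ℓ)` is at most
`(1+ε)·C(|C|,ℓ)/C(|A|,ℓ)`. -/
theorem union_bound_smallest_in_deleted {Ω U V : Type*} [MeasurableSpace Ω]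
    (P : Measure Ω) [IsProbabilityMeasure P]
    [Fintype U] [LinearOrder U] [LinearOrder V]
    (h : Ω → U → V) (A : Finset U) (ℓ : ℕ) (hℓ : ℓ ≤ A.card)
    (ε : ℝ) (hε : 0 ≤ ε) (C : Finset U) (hC : C ⊆ A) (hCcard : ℓ ≤ C.card)
    (hmin : ∀ X ⊆ A, X.card = ℓ →
      P {ω | ∀ x ∈ X, ∀ y ∈ A \ X, toLex (h ω x, x) < toLex (h ω y, y)}
        ≤ ENNReal.ofReal ((1 + ε) / (A.card.choose ℓ : ℝ))) :
    P {ω | ∃ C' ⊆ C, C'.card = ℓ ∧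
          C'.image (fun x => toLex (h ω x, x)) =
            Smallest (A.image fun x => toLex (h ω x, x)) ℓ}
      ≤ ENNReal.ofReal ((1 + ε) * (C.card.choose ℓ : ℝ) / (A.card.choose ℓ : ℝ)) := by
  classical
  have hsub : {ω | ∃ C' ⊆ C, C'.card = ℓ ∧
          C'.image (fun x => toLex (h ω x, x)) =
            Smallest (A.image fun x => toLex (h ω x, x)) ℓ}
      ⊆ ⋃ X ∈ C.powersetCard ℓ,
          {ω | ∀ x ∈ X, ∀ y ∈ A \ X, toLex (h ω x, x) < toLex (h ω y, y)} := by
    rintro ω ⟨C', hC'C, hC'card, himg⟩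
    refine Set.mem_biUnion (Finset.mem_powersetCard.mpr ⟨hC'C, hC'card⟩) ?_
    intro x hx y hy
    rw [Finset.mem_sdiff] at hy
    refine smallest_lt (A.image fun x => toLex (h ω x, x)) ℓ ?_ ?_ ?_
    · rw [← himg]; exact Finset.mem_image_of_mem _ hx
    · exact Finset.mem_image_of_mem _ hy.1
    · rw [← himg]
      intro hmem
      obtain ⟨z, hz, hzeq⟩ := Finset.mem_image.mp hmem
      have : z = y := congrArg (Prod.snd ∘ ofLex) hzeq
      exact hy.2 (this ▸ hz)
  calc P _ ≤ P (⋃ X ∈ C.powersetCard ℓ,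
          {ω | ∀ x ∈ X, ∀ y ∈ A \ X, toLex (h ω x, x) < toLex (h ω y, y)}) :=
        measure_mono hsub
    _ ≤ ∑ X ∈ C.powersetCard ℓ,
          P {ω | ∀ x ∈ X, ∀ y ∈ A \ X, toLex (h ω x, x) < toLex (h ω y, y)} :=
        measure_biUnion_finset_le _ _
    _ ≤ ∑ _X ∈ C.powersetCard ℓ, ENNReal.ofReal ((1 + ε) / (A.card.choose ℓ : ℝ)) := by
        refine Finset.sum_le_sum fun X hX => ?_
        obtain ⟨h1, h2⟩ := Finset.mem_powersetCard.mp hX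
        exact hmin X (h1.trans hC) h2
    _ = (C.card.choose ℓ : ENNReal) * ENNReal.ofReal ((1 + ε) / (A.card.choose ℓ : ℝ)) := by
        rw [Finset.sum_const, Finset.card_powersetCard, nsmul_eq_mul]
    _ = ENNReal.ofReal ((1 + ε) * (C.card.choose ℓ : ℝ) / (A.card.choose ℓ : ℝ)) := by
        rw [← ENNReal.ofReal_natCast (C.card.choose ℓ), ← ENNReal.ofReal_mul (by positivity)]
        congr 1
        field_simp
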